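/- Let k ≥ 1 and let (ℂ^{2k}, ω₁, ω₂) be the Jordan pair J_{2k,μ} for some μ ∈ ℂ, or the pair J_{2k,∞}. Suppose (β_i)_{i≥0} is a sequence of vectors in ℂ^{2k} such that ω₁(β₀, w) = 0 for all w ∈ ℂ^{2k}, and ω₂(β_i, w) = ω₁(β_{i+1}, w) for all w ∈ ℂ^{2k} and all i ≥ 0. Then β_i = 0 for every i ≥ 0. -/

import Mathlib

open Matrix

noncomputable section

def formOf {n : ℕ} (M : Matrix (Fin n) (Fin n) ℂ) (x y : Fin n → ℂ) : ℂ :=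
  x ⬝ᵥ M.mulVec y

/-- The `k×k` Jordan block with eigenvalue `μ` (superdiagonal `1`). -/
def jordanBlk (k : ℕ) (μ : ℂ) : Matrix (Fin k) (Fin k) ℂ := fun i j =>
  if j = i then μ else if j.val = i.val + 1 then 1 else 0

def sumEquiv (k : ℕ) : (Fin k ⊕ Fin k) ≃ Fin (2 * k) :=
  finSumFinEquiv.trans (finCongr (two_mul k).symm)

/-- First form of the Jordan pair `J_{2k,μ}`; `μ = none` means `μ = ∞`. -/
def jordanMat1 (k : ℕ) (μ : Option ℂ) : Matrix (Fin (2 * k)) (Fin (2 * k)) ℂ :=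
  Matrix.reindex (sumEquiv k) (sumEquiv k)
    (match μ with
      | some m => Matrix.fromBlocks 0 (jordanBlk k m) (-(jordanBlk k m)ᵀ) 0
      | none => Matrix.fromBlocks 0 1 (-1) 0)

/-- Second form of the Jordan pair `J_{2k,μ}`; `μ = none` means `μ = ∞`. -/
def jordanMat2 (k : ℕ) (μ : Option ℂ) : Matrix (Fin (2 * k)) (Fin (2 * k)) ℂ :=
  Matrix.reindex (sumEquiv k) (sumEquiv k)
    (match μ with
      | some _ => Matrix.fromBlocks 0 1 (-1) 0
      | none => Matrix.fromBlocks 0 (jordanBlk k 0) (-(jordanBlk k 0)ᵀ) 0)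

lemma vecMul_eq_zero_of_form {n : ℕ} {M : Matrix (Fin n) (Fin n) ℂ} {x : Fin n → ℂ}
    (h : ∀ w, formOf M x w = 0) : x ᵥ* M = 0 := by
  funext j
  have := h (Pi.single j 1)
  rw [formOf, dotProduct_mulVec] at this
  simpa using this

lemma vecMul_eq_of_form {n : ℕ} {M N : Matrix (Fin n) (Fin n) ℂ} {x y : Fin n → ℂ}
    (h : ∀ w, formOf M x w = formOf N y w) : x ᵥ* M = y ᵥ* N := by
  funext j
  have := h (Pi.single j 1)
  rw [formOf, formOf, dotProduct_mulVec, dotProduct_mulVec] at this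
  simpa using this

lemma jordanBlk_zero_mulVec {k : ℕ} (x : Fin k → ℂ) (j : Fin k) :
    (jordanBlk k 0 *ᵥ x) j = if h : j.val + 1 < k then x ⟨j.val + 1, h⟩ else 0 := by
  simp only [mulVec, dotProduct, jordanBlk]
  split_ifs with h
  · rw [Finset.sum_eq_single (⟨j.val + 1, h⟩ : Fin k)]
    · have h1 : ¬ ((⟨j.val + 1, h⟩ : Fin k) = j) := by simp [Fin.ext_iff]
      simp [h1]
    · intro b _ hb
      have h1 : ¬ b.val = j.val + 1 := fun hc => hb (Fin.ext hc)
      by_cases h2 : b = j <;> simp [h1, h2]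
    · simp
  · apply Finset.sum_eq_zero
    intro b _
    have hb := b.isLt
    have h1 : ¬ b.val = j.val + 1 := by omega
    by_cases h2 : b = j <;> simp [h1, h2]

lemma jordanBlk_zero_transpose_mulVec {k : ℕ} (x : Fin k → ℂ) (j : Fin k) :
    ((jordanBlk k 0)ᵀ *ᵥ x) j
      = if h : 0 < j.val then x ⟨j.val - 1, lt_of_le_of_lt (Nat.sub_le _ _) j.isLt⟩ else 0 := by
  simp only [mulVec, dotProduct, transpose_apply, jordanBlk]
  split_ifs with h
  · rw [Finset.sum_eq_single (⟨j.val - 1, lt_of_le_of_lt (Nat.sub_le _ _) j.isLt⟩ : Fin k)]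
    · have h1 : ¬ (j = (⟨j.val - 1, lt_of_le_of_lt (Nat.sub_le _ _) j.isLt⟩ : Fin k)) := by
        simp only [Fin.ext_iff]; omega
      rw [if_neg h1, if_pos (show j.val = (j.val - 1) + 1 by omega), one_mul]
    · intro b _ hb
      have h1 : ¬ j.val = b.val + 1 := by
        intro hc
        exact hb (Fin.ext (show b.val = j.val - 1 by omega))
      by_cases h2 : j = b <;> simp [h1, h2]
    · simp
  · apply Finset.sum_eq_zero
    intro b _
    have h1 : ¬ j.val = b.val + 1 := by omega
    by_cases h2 : j = b <;> simp [h1, h2]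

lemma chain_down {k : ℕ} (v : ℕ → Fin k → ℂ)
    (hc : ∀ i, v i = jordanBlk k 0 *ᵥ v (i + 1)) : ∀ i, v i = 0 := by
  suffices h : ∀ n i (j : Fin k), k ≤ j.val + n → v i j = 0 by
    intro i; funext j; exact h k i j (by omega)
  intro n
  induction n with
  | zero => intro i j hj; have := j.isLt; omega
  | succ n ih =>
    intro i j hj
    rw [hc i, jordanBlk_zero_mulVec]
    split_ifs with h
    · exact ih (i + 1) ⟨j.val + 1, h⟩ (by simp; omega)
    · rfl

lemma chain_up {k : ℕ} (u : ℕ → Fin k → ℂ)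
    (hc : ∀ i, u i = (jordanBlk k 0)ᵀ *ᵥ u (i + 1)) : ∀ i, u i = 0 := by
  suffices h : ∀ n i (j : Fin k), j.val < n → u i j = 0 by
    intro i; funext j; exact h k i j j.isLt
  intro n
  induction n with
  | zero => intro i j hj; omega
  | succ n ih =>
    intro i j hj
    rw [hc i, jordanBlk_zero_transpose_mulVec]
    split_ifs with h
    · exact ih (i + 1) _ (by simp; omega)
    · rfl

lemma jordanBlk_det (k : ℕ) (m : ℂ) : (jordanBlk k m).det = m ^ k := by
  rw [Matrix.det_of_upperTriangular]
  · simp [jordanBlk]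
  · intro i j hij
    have hij' : (j : ℕ) < (i : ℕ) := hij
    simp only [jordanBlk]
    rw [if_neg (by exact fun hc => absurd (Fin.val_eq_of_eq hc) (by omega)), if_neg (by omega)]

lemma mulVec_eq_zero_of_det {n : ℕ} {M : Matrix (Fin n) (Fin n) ℂ} (h : IsUnit M.det)
    {x : Fin n → ℂ} (hx : M *ᵥ x = 0) : x = 0 := by
  have h2 : M⁻¹ *ᵥ (M *ᵥ x) = M⁻¹ *ᵥ (0 : Fin n → ℂ) := congrArg _ hx
  rwa [Matrix.mulVec_mulVec, Matrix.nonsing_inv_mul _ h, Matrix.one_mulVec,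
    Matrix.mulVec_zero] at h2

lemma key {k : ℕ} (x : Fin (2 * k) → ℂ) (A B C D : Matrix (Fin k) (Fin k) ℂ)
    (s : Fin k ⊕ Fin k) :
    (x ᵥ* (Matrix.reindex (sumEquiv k) (sumEquiv k) (Matrix.fromBlocks A B C D)))
        (sumEquiv k s)
      = (Sum.elim ((x ∘ sumEquiv k ∘ Sum.inl) ᵥ* A + (x ∘ sumEquiv k ∘ Sum.inr) ᵥ* C)
          ((x ∘ sumEquiv k ∘ Sum.inl) ᵥ* B + (x ∘ sumEquiv k ∘ Sum.inr) ᵥ* D)) s := by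
  rw [Matrix.reindex_apply, Matrix.submatrix_vecMul_equiv]
  simp [Matrix.vecMul_fromBlocks, Function.comp_assoc]

/-- an anchored Lenard chain on a Jordan pair vanishes. -/
theorem jordan_lenard_chain_vanishes (k : ℕ) (hk : 1 ≤ k) (μ : Option ℂ)
    (β : ℕ → Fin (2 * k) → ℂ)
    (hanch : ∀ w, formOf (jordanMat1 k μ) (β 0) w = 0)
    (hrec : ∀ i w, formOf (jordanMat2 k μ) (β i) w
        = formOf (jordanMat1 k μ) (β (i + 1)) w) :
    ∀ i, β i = 0 := by
  classical
  have hanch' : (β 0) ᵥ* (jordanMat1 k μ) = 0 := vecMul_eq_zero_of_form hanch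
  have hrec' : ∀ i, (β i) ᵥ* (jordanMat2 k μ) = (β (i + 1)) ᵥ* (jordanMat1 k μ) :=
    fun i => vecMul_eq_of_form (hrec i)
  have hfin : (∀ i, β i ∘ sumEquiv k ∘ Sum.inl = 0) → (∀ i, β i ∘ sumEquiv k ∘ Sum.inr = 0) →
      ∀ i, β i = 0 := by
    intro h1 h2 i
    funext x
    show β i x = 0
    have hex : sumEquiv k ((sumEquiv k).symm x) = x := (sumEquiv k).apply_symm_apply x
    rcases hs : (sumEquiv k).symm x with j | j
    · have hx : x = sumEquiv k (Sum.inl j) := by rw [← hs, hex]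
      rw [hx]
      exact congrFun (h1 i) j
    · have hx : x = sumEquiv k (Sum.inr j) := by rw [← hs, hex]
      rw [hx]
      exact congrFun (h2 i) j
  cases μ with
  | some m =>
    have hM1 : jordanMat1 k (some m) = Matrix.reindex (sumEquiv k) (sumEquiv k)
        (Matrix.fromBlocks 0 (jordanBlk k m) (-(jordanBlk k m)ᵀ) 0) := rfl
    have hM2 : jordanMat2 k (some m) = Matrix.reindex (sumEquiv k) (sumEquiv k)
        (Matrix.fromBlocks 0 (1 : Matrix (Fin k) (Fin k) ℂ) (-1) 0) := rfl
    have anch : ∀ s, (Sum.elim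
        ((β 0 ∘ sumEquiv k ∘ Sum.inl) ᵥ* (0 : Matrix (Fin k) (Fin k) ℂ)
          + (β 0 ∘ sumEquiv k ∘ Sum.inr) ᵥ* (-(jordanBlk k m)ᵀ))
        ((β 0 ∘ sumEquiv k ∘ Sum.inl) ᵥ* (jordanBlk k m)
          + (β 0 ∘ sumEquiv k ∘ Sum.inr) ᵥ* (0 : Matrix (Fin k) (Fin k) ℂ))) s = 0 := by
      intro s
      rw [← key (β 0) 0 (jordanBlk k m) (-(jordanBlk k m)ᵀ) 0 s, ← hM1, hanch']
      rfl
    have hv0 : jordanBlk k m *ᵥ (β 0 ∘ sumEquiv k ∘ Sum.inr) = 0 := by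
      funext j
      have h := anch (Sum.inl j)
      simp only [Sum.elim_inl, Matrix.vecMul_zero, zero_add, Matrix.vecMul_neg,
        Matrix.vecMul_transpose, Pi.neg_apply, neg_eq_zero] at h
      exact h
    have hu0 : (jordanBlk k m)ᵀ *ᵥ (β 0 ∘ sumEquiv k ∘ Sum.inl) = 0 := by
      funext j
      have h := anch (Sum.inr j)
      simp only [Sum.elim_inr, Matrix.vecMul_zero, add_zero] at h
      rw [Matrix.mulVec_transpose]
      exact h
    have hrecb : ∀ i s, (Sum.elim
        ((β i ∘ sumEquiv k ∘ Sum.inl) ᵥ* (0 : Matrix (Fin k) (Fin k) ℂ)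
          + (β i ∘ sumEquiv k ∘ Sum.inr) ᵥ* (-1))
        ((β i ∘ sumEquiv k ∘ Sum.inl) ᵥ* (1 : Matrix (Fin k) (Fin k) ℂ)
          + (β i ∘ sumEquiv k ∘ Sum.inr) ᵥ* (0 : Matrix (Fin k) (Fin k) ℂ))) s
        = (Sum.elim
        ((β (i + 1) ∘ sumEquiv k ∘ Sum.inl) ᵥ* (0 : Matrix (Fin k) (Fin k) ℂ)
          + (β (i + 1) ∘ sumEquiv k ∘ Sum.inr) ᵥ* (-(jordanBlk k m)ᵀ))
        ((β (i + 1) ∘ sumEquiv k ∘ Sum.inl) ᵥ* (jordanBlk k m)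
          + (β (i + 1) ∘ sumEquiv k ∘ Sum.inr) ᵥ* (0 : Matrix (Fin k) (Fin k) ℂ))) s := by
      intro i s
      rw [← key (β i) 0 1 (-1) 0 s, ← key (β (i + 1)) 0 (jordanBlk k m) (-(jordanBlk k m)ᵀ) 0 s,
        ← hM1, ← hM2]
      exact congrFun (hrec' i) (sumEquiv k s)
    have recv : ∀ i, (β i ∘ sumEquiv k ∘ Sum.inr)
        = jordanBlk k m *ᵥ (β (i + 1) ∘ sumEquiv k ∘ Sum.inr) := by
      intro i; funext j
      have h := hrecb i (Sum.inl j)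
      simp only [Sum.elim_inl, Matrix.vecMul_zero, zero_add, Matrix.vecMul_neg,
        Matrix.vecMul_one, Matrix.vecMul_transpose, Pi.neg_apply, neg_inj] at h
      exact h
    have recu : ∀ i, (β i ∘ sumEquiv k ∘ Sum.inl)
        = (jordanBlk k m)ᵀ *ᵥ (β (i + 1) ∘ sumEquiv k ∘ Sum.inl) := by
      intro i; funext j
      have h := hrecb i (Sum.inr j)
      simp only [Sum.elim_inr, Matrix.vecMul_zero, add_zero, Matrix.vecMul_one] at h
      rw [h, Matrix.mulVec_transpose]
    rcases eq_or_ne m 0 with rfl | hm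
    · exact hfin (chain_up _ recu) (chain_down _ recv)
    · have hdet : IsUnit (jordanBlk k m).det := by
        rw [jordanBlk_det]; exact isUnit_iff_ne_zero.mpr (pow_ne_zero _ hm)
      have hdetT : IsUnit ((jordanBlk k m)ᵀ).det := by rwa [Matrix.det_transpose]
      apply hfin
      · intro i
        induction i with
        | zero => exact mulVec_eq_zero_of_det hdetT hu0
        | succ n ih => exact mulVec_eq_zero_of_det hdetT (by rw [← recu n, ih])
      · intro i
        induction i with
        | zero => exact mulVec_eq_zero_of_det hdet hv0
        | succ n ih => exact mulVec_eq_zero_of_det hdet (by rw [← recv n, ih])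
  | none =>
    have hM1 : jordanMat1 k none = Matrix.reindex (sumEquiv k) (sumEquiv k)
        (Matrix.fromBlocks 0 (1 : Matrix (Fin k) (Fin k) ℂ) (-1) 0) := rfl
    have hM2 : jordanMat2 k none = Matrix.reindex (sumEquiv k) (sumEquiv k)
        (Matrix.fromBlocks 0 (jordanBlk k 0) (-(jordanBlk k 0)ᵀ) 0) := rfl
    have anch : ∀ s, (Sum.elim
        ((β 0 ∘ sumEquiv k ∘ Sum.inl) ᵥ* (0 : Matrix (Fin k) (Fin k) ℂ)
          + (β 0 ∘ sumEquiv k ∘ Sum.inr) ᵥ* (-1))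
        ((β 0 ∘ sumEquiv k ∘ Sum.inl) ᵥ* (1 : Matrix (Fin k) (Fin k) ℂ)
          + (β 0 ∘ sumEquiv k ∘ Sum.inr) ᵥ* (0 : Matrix (Fin k) (Fin k) ℂ))) s = 0 := by
      intro s
      rw [← key (β 0) 0 1 (-1) 0 s, ← hM1, hanch']
      rfl
    have hv0 : (β 0 ∘ sumEquiv k ∘ Sum.inr) = 0 := by
      funext j
      have h := anch (Sum.inl j)
      simp only [Sum.elim_inl, Matrix.vecMul_zero, zero_add, Matrix.vecMul_neg,
        Matrix.vecMul_one, Pi.neg_apply, neg_eq_zero] at h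
      exact h
    have hu0 : (β 0 ∘ sumEquiv k ∘ Sum.inl) = 0 := by
      funext j
      have h := anch (Sum.inr j)
      simp only [Sum.elim_inr, Matrix.vecMul_zero, add_zero, Matrix.vecMul_one] at h
      exact h
    have hrecb : ∀ i s, (Sum.elim
        ((β i ∘ sumEquiv k ∘ Sum.inl) ᵥ* (0 : Matrix (Fin k) (Fin k) ℂ)
          + (β i ∘ sumEquiv k ∘ Sum.inr) ᵥ* (-(jordanBlk k 0)ᵀ))
        ((β i ∘ sumEquiv k ∘ Sum.inl) ᵥ* (jordanBlk k 0)
          + (β i ∘ sumEquiv k ∘ Sum.inr) ᵥ* (0 : Matrix (Fin k) (Fin k) ℂ))) s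
        = (Sum.elim
        ((β (i + 1) ∘ sumEquiv k ∘ Sum.inl) ᵥ* (0 : Matrix (Fin k) (Fin k) ℂ)
          + (β (i + 1) ∘ sumEquiv k ∘ Sum.inr) ᵥ* (-1))
        ((β (i + 1) ∘ sumEquiv k ∘ Sum.inl) ᵥ* (1 : Matrix (Fin k) (Fin k) ℂ)
          + (β (i + 1) ∘ sumEquiv k ∘ Sum.inr) ᵥ* (0 : Matrix (Fin k) (Fin k) ℂ))) s := by
      intro i s
      rw [← key (β i) 0 (jordanBlk k 0) (-(jordanBlk k 0)ᵀ) 0 s, ← key (β (i + 1)) 0 1 (-1) 0 s,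
        ← hM1, ← hM2]
      exact congrFun (hrec' i) (sumEquiv k s)
    have recv : ∀ i, (β (i + 1) ∘ sumEquiv k ∘ Sum.inr)
        = jordanBlk k 0 *ᵥ (β i ∘ sumEquiv k ∘ Sum.inr) := by
      intro i; funext j
      have h := hrecb i (Sum.inl j)
      simp only [Sum.elim_inl, Matrix.vecMul_zero, zero_add, Matrix.vecMul_neg,
        Matrix.vecMul_one, Matrix.vecMul_transpose, Pi.neg_apply, neg_inj] at h
      exact h.symm
    have recu : ∀ i, (β (i + 1) ∘ sumEquiv k ∘ Sum.inl)
        = (jordanBlk k 0)ᵀ *ᵥ (β i ∘ sumEquiv k ∘ Sum.inl) := by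
      intro i; funext j
      have h := hrecb i (Sum.inr j)
      simp only [Sum.elim_inr, Matrix.vecMul_zero, add_zero, Matrix.vecMul_one] at h
      rw [← h, Matrix.mulVec_transpose]
    apply hfin
    · intro i
      induction i with
      | zero => exact hu0
      | succ n ih => rw [recu n, ih, Matrix.mulVec_zero]
    · intro i
      induction i with
      | zero => exact hv0
      | succ n ih => rw [recv n, ih, Matrix.mulVec_zero]
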